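/- Let u ∈ l_1(ℕ) be a non-zero absolutely summable real sequence, and let Φ : l_∞(ℕ) → ℝ be the functional Φ(x) = Σ_{n∈ℕ} u_n x_n. Then the kernel V := ker(Φ) ⊆ l_∞(ℕ) is injective as a metric space with the induced metric if and only if ‖u‖₁ ≤ 2 ‖u‖_∞, where ‖u‖₁ = Σ_{n∈ℕ} |u_n| and ‖u‖_∞ = sup_{n∈ℕ} |u_n|. -/

import Mathlib

set_option maxHeartbeats 1000000
set_option synthInstance.maxHeartbeats 400000

universe u v w

/-- A metric space `X` is injective if for every pair of metric spaces `A`, `B`, every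
isometric embedding `ι : A → B` and every `1`-Lipschitz map `f : A → X`, there is a
`1`-Lipschitz map `g : B → X` with `g ∘ ι = f`. -/
def IsInjectiveMetricSpace (X : Type u) [MetricSpace X] : Prop :=
  ∀ ⦃A : Type v⦄ ⦃B : Type w⦄ [MetricSpace A] [MetricSpace B],
    ∀ ι : A → B, Isometry ι → ∀ f : A → X, LipschitzWith 1 f →
      ∃ g : B → X, LipschitzWith 1 g ∧ ∀ a, g (ι a) = f a

/-- Hyperconvexity, with nonemptiness built in (empty family). Universe-free index. -/
def Hyperconvex (X : Type u) [MetricSpace X] : Prop :=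
  ∀ D : Set (X × ℝ), (∀ p ∈ D, ∀ q ∈ D, dist p.1 q.1 ≤ p.2 + q.2) →
    ∃ x : X, ∀ p ∈ D, dist x p.1 ≤ p.2

theorem Hyperconvex.isInjective {X : Type u} [MetricSpace X] (hX : Hyperconvex X) :
    IsInjectiveMetricSpace.{u, v, w} X := by
  intro A B _ _ ι hι f hf
  classical
  set 𝒮 : Set (Set (B × X)) :=
    {G | (∀ p ∈ G, ∀ q ∈ G, dist p.2 q.2 ≤ dist p.1 q.1) ∧ ∀ a, (ι a, f a) ∈ G} with h𝒮
  have hbase : (Set.range fun a => (ι a, f a)) ∈ 𝒮 := by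
    constructor
    · rintro p ⟨a, rfl⟩ q ⟨a', rfl⟩
      have := hf.dist_le_mul a a'
      rw [NNReal.coe_one, one_mul] at this
      simpa [hι.dist_eq] using this
    · intro a; exact ⟨a, rfl⟩
  obtain ⟨G, -, hGmem, hGmax⟩ :
      ∃ G, (Set.range fun a => (ι a, f a)) ⊆ G ∧ G ∈ 𝒮 ∧ ∀ H ∈ 𝒮, G ⊆ H → H ⊆ G := by
    obtain ⟨G, hsub, hmax⟩ := zorn_subset_nonempty 𝒮 (fun c hc hchain hne => by
      refine ⟨⋃₀ c, ⟨?_, ?_⟩, fun s hs => Set.subset_sUnion_of_mem hs⟩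
      · rintro p ⟨s, hs, hps⟩ q ⟨t, ht, hqt⟩
        rcases hchain.total hs ht with h | h
        · exact (hc ht).1 p (h hps) q hqt
        · exact (hc hs).1 p hps q (h hqt)
      · obtain ⟨s, hs⟩ := hne
        intro a; exact ⟨s, hs, (hc hs).2 a⟩) _ hbase
    exact ⟨G, hsub, hmax.1, fun H hH hGH => hmax.2 hH hGH⟩
  have htot : ∀ b : B, ∃ x : X, (b, x) ∈ G := by
    intro b
    by_contra hb
    push_neg at hb
    obtain ⟨x, hx⟩ := hX ((fun p : B × X => (p.2, dist b p.1)) '' G) (by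
      rintro _ ⟨p, hp, rfl⟩ _ ⟨q, hq, rfl⟩
      calc dist p.2 q.2 ≤ dist p.1 q.1 := hGmem.1 p hp q hq
        _ ≤ dist p.1 b + dist b q.1 := dist_triangle _ _ _
        _ = dist b p.1 + dist b q.1 := by rw [dist_comm])
    have hmem : insert (b, x) G ∈ 𝒮 := by
      constructor
      · rintro p (rfl | hp) q (rfl | hq)
        · simp
        · simpa [dist_comm] using hx _ ⟨q, hq, rfl⟩
        · simpa [dist_comm] using hx _ ⟨p, hp, rfl⟩
        · exact hGmem.1 p hp q hq
      · intro a; exact Set.mem_insert_iff.2 (Or.inr (hGmem.2 a))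
    have := hGmax _ hmem (Set.subset_insert _ _) (Set.mem_insert (b, x) _)
    exact hb x this
  choose g hg using htot
  refine ⟨g, ?_, ?_⟩
  · apply LipschitzWith.of_dist_le_mul
    intro b b'
    rw [NNReal.coe_one, one_mul]
    exact hGmem.1 _ (hg b) _ (hg b')
  · intro a
    have h1 := hGmem.1 _ (hg (ι a)) _ (hGmem.2 a)
    simp only [dist_self] at h1
    exact dist_le_zero.1 h1


lemma summable_mul_of_bdd {u x : ℕ → ℝ} (hsum : Summable fun n => |u n|)
    {C : ℝ} (hx : ∀ n, |x n| ≤ C) : Summable fun n => u n * x n := by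
  apply Summable.of_abs
  apply Summable.of_nonneg_of_le (fun n => abs_nonneg _) (fun n => ?_) (hsum.mul_right C)
  rw [abs_mul]
  exact mul_le_mul_of_nonneg_left (hx n) (abs_nonneg _)

lemma key_corner (u : ℕ → ℝ) (hsum : Summable fun n => |u n|)
    (m₀ : ℕ) (hm₀ : ∀ n, |u n| ≤ |u m₀|) (hm₀pos : 0 < |u m₀|)
    (hle : (∑' n, |u n|) ≤ 2 * |u m₀|)
    (D : Set ((ℕ → ℝ) × ℝ)) (hne : D.Nonempty)
    (hbdd : ∀ p ∈ D, ∃ C, ∀ n, |p.1 n| ≤ C)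
    (hker : ∀ p ∈ D, (∑' n, u n * p.1 n) = 0)
    (hpair : ∀ p ∈ D, ∀ q ∈ D, ∀ n, p.1 n - p.2 ≤ q.1 n + q.2) :
    ∃ y : ℕ → ℝ, (∀ p ∈ D, ∀ n, p.1 n - p.2 ≤ y n ∧ y n ≤ p.1 n + p.2) ∧
      (∑' n, u n * y n) ≤ 0 := by
  classical
  haveI : Nonempty D := hne.to_subtype
  obtain ⟨p₀, hp₀⟩ := hne
  obtain ⟨C₀, hC₀⟩ := hbdd p₀ hp₀
  set a : ℕ → ℝ := fun n => ⨆ p : D, ((p : (ℕ → ℝ) × ℝ).1 n - (p : (ℕ → ℝ) × ℝ).2) with ha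
  set b : ℕ → ℝ := fun n => ⨅ p : D, ((p : (ℕ → ℝ) × ℝ).1 n + (p : (ℕ → ℝ) × ℝ).2) with hb
  have hbddA : ∀ n, BddAbove (Set.range fun p : D => ((p : (ℕ → ℝ) × ℝ).1 n - (p : (ℕ → ℝ) × ℝ).2)) := by
    intro n
    refine ⟨p₀.1 n + p₀.2, ?_⟩
    rintro _ ⟨p, rfl⟩
    exact hpair _ p.2 _ hp₀ n
  have hbddB : ∀ n, BddBelow (Set.range fun p : D => ((p : (ℕ → ℝ) × ℝ).1 n + (p : (ℕ → ℝ) × ℝ).2)) := by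
    intro n
    refine ⟨p₀.1 n - p₀.2, ?_⟩
    rintro _ ⟨p, rfl⟩
    exact hpair _ hp₀ _ p.2 n
  have haleb : ∀ n, a n ≤ b n := by
    intro n
    apply ciSup_le
    intro p
    apply le_ciInf
    intro q
    exact hpair _ p.2 _ q.2 n
  have hlea : ∀ p ∈ D, ∀ n, p.1 n - p.2 ≤ a n := fun p hp n =>
    le_ciSup (hbddA n) (⟨p, hp⟩ : D)
  have hble : ∀ p ∈ D, ∀ n, b n ≤ p.1 n + p.2 := fun p hp n =>
    ciInf_le (hbddB n) (⟨p, hp⟩ : D)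
  set y : ℕ → ℝ := fun n => if 0 ≤ u n then a n else b n with hy
  have hy_mem : ∀ p ∈ D, ∀ n, p.1 n - p.2 ≤ y n ∧ y n ≤ p.1 n + p.2 := by
    intro p hp n
    by_cases h : 0 ≤ u n <;> simp only [hy, if_pos, if_neg, h, if_true, if_false]
    · exact ⟨hlea p hp n, (haleb n).trans (hble p hp n)⟩
    · exact ⟨(hlea p hp n).trans (haleb n), hble p hp n⟩
  have hyC : ∀ n, |y n| ≤ C₀ + |p₀.2| := by
    intro n
    obtain ⟨h1, h2⟩ := hy_mem p₀ hp₀ n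
    rw [abs_le]
    have k1 := neg_abs_le (p₀.1 n)
    have k2 := neg_abs_le p₀.2
    have k3 := le_abs_self (p₀.1 n)
    have k4 := le_abs_self p₀.2
    have k5 := hC₀ n
    constructor <;> [skip; skip] <;> linarith
  refine ⟨y, hy_mem, ?_⟩
  by_contra hcon
  push_neg at hcon
  set m := ∑' n, u n * y n with hm
  set δ := m / (2 * |u m₀|) with hδ
  have hδpos : 0 < δ := div_pos hcon (by linarith)
  have hSy : Summable fun n => u n * y n := summable_mul_of_bdd hsum hyC
  -- common tail given a suitable witness ball
  have tail : ∀ p ∈ D, u m₀ * (y m₀ - p.1 m₀) ≤ |u m₀| * (δ - p.2) → False := by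
    rintro ⟨c, r⟩ hp hwit
    simp only at hwit
    obtain ⟨Cc, hCc⟩ := hbdd _ hp
    have hSc : Summable fun n => u n * c n := summable_mul_of_bdd hsum hCc
    have hr : 0 ≤ r := by
      have := hpair _ hp _ hp m₀
      simp only at this
      linarith
    have hterm : ∀ n, u n * (y n - c n) ≤ |u n| * r := by
      intro n
      obtain ⟨h1, h2⟩ := hy_mem _ hp n
      simp only at h1 h2
      calc u n * (y n - c n) ≤ |u n * (y n - c n)| := le_abs_self _
        _ = |u n| * |y n - c n| := abs_mul _ _
        _ ≤ |u n| * r := mul_le_mul_of_nonneg_left (abs_le.2 ⟨by linarith, by linarith⟩) (abs_nonneg _)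
    set f : ℕ → ℝ := fun n => u n * (y n - c n) with hf
    have hSf : Summable f := by
      have : f = fun n => u n * y n - u n * c n := by funext n; simp [hf]; ring
      rw [this]; exact hSy.sub hSc
    have hfm : ∑' n, f n = m := by
      have h1 : (fun n => u n * (y n - c n)) = fun n => u n * y n - u n * c n := by
        funext n; ring
      rw [hf, h1, Summable.tsum_sub hSy hSc, hker _ hp, sub_zero]
    have hsplit : ∑' n, f n = f m₀ + ∑' n, if n = m₀ then 0 else f n :=
      Summable.tsum_eq_add_tsum_ite hSf m₀
    have hSfu : Summable (fun n => if n = m₀ then 0 else f n) := by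
      have : (fun n => if n = m₀ then 0 else f n) = Function.update f m₀ 0 := by
        funext n; simp [Function.update_apply]
      rw [this]; exact hSf.update m₀ 0
    have hSgu : Summable (fun n => if n = m₀ then 0 else |u n| * r) := by
      have : (fun n => if n = m₀ then 0 else |u n| * r) = Function.update (fun n => |u n| * r) m₀ 0 := by
        funext n; simp [Function.update_apply]
      rw [this]; exact (hsum.mul_right r).update m₀ 0
    have hbound : ∑' n, (if n = m₀ then 0 else f n) ≤ ∑' n, (if n = m₀ then 0 else |u n| * r) := by
      apply Summable.tsum_le_tsum _ hSfu hSgu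
      intro n
      by_cases h : n = m₀ <;> simp [h, hterm n]
      exact hterm n
    have hgu : ∑' n, (if n = m₀ then 0 else |u n| * r) = (∑' n, |u n|) * r - |u m₀| * r := by
      have h1 := Summable.tsum_eq_add_tsum_ite (hsum.mul_right r) m₀
      rw [tsum_mul_right] at h1
      linarith
    have hfinal : m ≤ |u m₀| * (δ - r) + ((∑' n, |u n|) * r - |u m₀| * r) := by
      rw [← hfm, hsplit]
      have := hwit
      have : f m₀ ≤ |u m₀| * (δ - r) := hwit
      linarith
    have hId : |u m₀| * δ = m / 2 := by
      rw [hδ]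
      field_simp
    have hrS : (∑' n, |u n|) * r - 2 * |u m₀| * r ≤ 0 := by
      have := mul_le_mul_of_nonneg_right hle hr
      linarith
    rw [mul_sub, hId] at hfinal
    linarith
  rcases le_or_gt 0 (u m₀) with hsgn | hsgn
  · have hym : y m₀ = a m₀ := by simp [hy, hsgn]
    have hlt : a m₀ - δ < a m₀ := by linarith [hδpos]
    simp only [ha] at hlt
    obtain ⟨p, hp⟩ := exists_lt_of_lt_ciSup hlt
    apply tail p p.2
    have habs : |u m₀| = u m₀ := abs_of_nonneg hsgn
    have h1 : y m₀ - p.1.1 m₀ ≤ δ - p.1.2 := by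
      rw [hym]; linarith [hp]
    rw [habs]
    exact mul_le_mul_of_nonneg_left h1 hsgn
  · have hym : y m₀ = b m₀ := by simp [hy, not_le.2 hsgn]
    have hlt : b m₀ < b m₀ + δ := by linarith [hδpos]
    conv at hlt => lhs; rw [hb]
    obtain ⟨p, hp⟩ := exists_lt_of_ciInf_lt hlt
    apply tail p p.2
    have habs : |u m₀| = -u m₀ := abs_of_neg hsgn
    have h1 : p.1.2 - δ ≤ y m₀ - p.1.1 m₀ := by
      rw [hym]; linarith [hp]
    rw [habs]
    nlinarith [h1, hsgn]


section helpers
lemma coord_abs_le_norm (x : lp (fun _ : ℕ => ℝ) ⊤) (n : ℕ) : |x n| ≤ ‖x‖ := by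
  have := lp.norm_apply_le_norm ENNReal.top_ne_zero x n
  simpa [Real.norm_eq_abs] using this

lemma coord_abs_le_dist (x y : lp (fun _ : ℕ => ℝ) ⊤) (n : ℕ) : |x n - y n| ≤ dist x y := by
  rw [dist_eq_norm]
  have := lp.norm_apply_le_norm ENNReal.top_ne_zero (x - y) n
  simpa [Real.norm_eq_abs, lp.coeFn_sub, Pi.sub_apply] using this

lemma dist_le_of_coords (x y : lp (fun _ : ℕ => ℝ) ⊤) {r : ℝ} (hr : 0 ≤ r)
    (h : ∀ n, |x n - y n| ≤ r) : dist x y ≤ r := by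
  rw [dist_eq_norm]
  apply lp.norm_le_of_forall_le hr
  intro n
  simpa [Real.norm_eq_abs, lp.coeFn_sub, Pi.sub_apply] using h n
end helpers

theorem V_hyperconvex (u : ℕ → ℝ) (hsum : Summable fun n => |u n|)
    (m₀ : ℕ) (hm₀ : ∀ n, |u n| ≤ |u m₀|) (hm₀pos : 0 < |u m₀|)
    (hle : (∑' n, |u n|) ≤ 2 * |u m₀|) :
    Hyperconvex {x : lp (fun _ : ℕ => ℝ) ⊤ | ∑' n, u n * x n = 0} := by
  classical
  intro D' hpair'
  by_cases hD' : D'.Nonempty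
  swap
  · refine ⟨⟨0, ?_⟩, fun p hp => absurd ⟨p, hp⟩ hD'⟩
    simp [Set.mem_setOf_eq, lp.coeFn_zero]
  set D : Set ((ℕ → ℝ) × ℝ) :=
    (fun p : ({x : lp (fun _ : ℕ => ℝ) ⊤ | ∑' n, u n * x n = 0} : Set _) × ℝ =>
      (((p.1 : lp (fun _ : ℕ => ℝ) ⊤) : ∀ _ : ℕ, ℝ), p.2)) '' D' with hD
  have hne : D.Nonempty := hD'.image _
  have hbdd : ∀ p ∈ D, ∃ C, ∀ n, |p.1 n| ≤ C := by
    rintro _ ⟨p, hp, rfl⟩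
    exact ⟨‖(p.1 : lp (fun _ : ℕ => ℝ) ⊤)‖, fun n => coord_abs_le_norm _ n⟩
  have hker : ∀ p ∈ D, (∑' n, u n * p.1 n) = 0 := by
    rintro _ ⟨p, hp, rfl⟩
    exact p.1.2
  have hpairD : ∀ p ∈ D, ∀ q ∈ D, ∀ n, p.1 n - p.2 ≤ q.1 n + q.2 := by
    rintro _ ⟨p, hp, rfl⟩ _ ⟨q, hq, rfl⟩ n
    have h1 := coord_abs_le_dist (p.1 : lp (fun _ : ℕ => ℝ) ⊤) (q.1 : lp (fun _ : ℕ => ℝ) ⊤) n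
    have h2 := hpair' p hp q hq
    rw [Subtype.dist_eq] at h2
    have := abs_le.1 h1
    simp only []
    linarith [this.2]
  have hkerneg : ∀ p ∈ D, (∑' n, (fun k => -u k) n * p.1 n) = 0 := by
    intro p hp
    have h1 : (fun n => (fun k => -u k) n * p.1 n) = fun n => -(u n * p.1 n) := by
      funext n; ring
    rw [h1, tsum_neg, hker p hp, neg_zero]
  obtain ⟨y₁, hy₁mem, hy₁neg⟩ := key_corner u hsum m₀ hm₀ hm₀pos hle D hne hbdd hker hpairD
  obtain ⟨y₂, hy₂mem, hy₂neg⟩ := key_corner (fun k => -u k) (by simpa using hsum) m₀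
    (by simpa using hm₀) (by simpa using hm₀pos) (by simpa using hle) D hne hbdd hkerneg hpairD
  have hy₂pos : 0 ≤ ∑' n, u n * y₂ n := by
    have h1 : (fun n => (fun k => -u k) n * y₂ n) = fun n => -(u n * y₂ n) := by
      funext n; ring
    rw [h1, tsum_neg] at hy₂neg
    linarith
  obtain ⟨p₀, hp₀⟩ := hne
  obtain ⟨C₀, hC₀⟩ := hbdd p₀ hp₀
  have hybnd : ∀ y : ℕ → ℝ, (∀ p ∈ D, ∀ n, p.1 n - p.2 ≤ y n ∧ y n ≤ p.1 n + p.2) →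
      ∀ n, |y n| ≤ C₀ + |p₀.2| := by
    intro y hy n
    obtain ⟨h1, h2⟩ := hy p₀ hp₀ n
    have k1 := neg_abs_le (p₀.1 n)
    have k2 := neg_abs_le p₀.2
    have k3 := le_abs_self (p₀.1 n)
    have k4 := le_abs_self p₀.2
    have k5 := hC₀ n
    rw [abs_le]
    constructor <;> linarith
  have hSy₁ : Summable fun n => u n * y₁ n := summable_mul_of_bdd hsum (hybnd y₁ hy₁mem)
  have hSy₂ : Summable fun n => u n * y₂ n := summable_mul_of_bdd hsum (hybnd y₂ hy₂mem)
  -- combine y₁ and y₂ into a point of the kernel inside the box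
  obtain ⟨z, hzmem, hzΦ⟩ : ∃ z : ℕ → ℝ,
      (∀ p ∈ D, ∀ n, p.1 n - p.2 ≤ z n ∧ z n ≤ p.1 n + p.2) ∧ (∑' n, u n * z n) = 0 := by
    set α := ∑' n, u n * y₁ n with hα
    set β := ∑' n, u n * y₂ n with hβ
    rcases eq_or_lt_of_le (hy₁neg : α ≤ 0) with hα0 | hα0
    · exact ⟨y₁, hy₁mem, hα0.symm ▸ hα0⟩
    rcases eq_or_lt_of_le (hy₂pos : 0 ≤ β) with hβ0 | hβ0
    · exact ⟨y₂, hy₂mem, hβ0.symm⟩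
    have hden : 0 < β - α := by linarith
    set t := β / (β - α) with ht
    have ht0 : 0 ≤ t := le_of_lt (div_pos hβ0 hden)
    have ht1 : t ≤ 1 := by
      rw [ht, div_le_one hden]
      linarith
    refine ⟨fun n => t * y₁ n + (1 - t) * y₂ n, ?_, ?_⟩
    · intro p hp n
      obtain ⟨a1, a2⟩ := hy₁mem p hp n
      obtain ⟨b1, b2⟩ := hy₂mem p hp n
      have ht1' : 0 ≤ 1 - t := by linarith
      have l1 := mul_le_mul_of_nonneg_left a1 ht0
      have l2 := mul_le_mul_of_nonneg_left b1 ht1'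
      have l3 := mul_le_mul_of_nonneg_left a2 ht0
      have l4 := mul_le_mul_of_nonneg_left b2 ht1'
      constructor <;> simp only [] <;> nlinarith [l1, l2, l3, l4]
    · have h1 : (fun n => u n * (t * y₁ n + (1 - t) * y₂ n)) =
          fun n => t * (u n * y₁ n) + (1 - t) * (u n * y₂ n) := by
        funext n; ring
      rw [h1, Summable.tsum_add (hSy₁.mul_left t) (hSy₂.mul_left (1 - t)), tsum_mul_left, tsum_mul_left,
        ← hα, ← hβ, ht]
      field_simp
      ring
  have hzbnd := hybnd z hzmem
  have hzmem' : Memℓp z ⊤ := memℓp_infty (by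
    refine ⟨C₀ + |p₀.2|, ?_⟩
    rintro _ ⟨n, rfl⟩
    simpa [Real.norm_eq_abs] using hzbnd n)
  refine ⟨⟨⟨z, hzmem'⟩, hzΦ⟩, ?_⟩
  rintro p hp
  have hr : 0 ≤ p.2 := by
    have := hpair' p hp p hp
    have := dist_nonneg (x := p.1) (y := p.1)
    linarith
  rw [Subtype.dist_eq]
  apply dist_le_of_coords _ _ hr
  intro n
  obtain ⟨h1, h2⟩ := hzmem (((p.1 : lp (fun _ : ℕ => ℝ) ⊤) : ∀ _ : ℕ, ℝ), p.2) ⟨p, hp, rfl⟩ n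
  simp only [] at h1 h2
  rw [abs_le]
  constructor <;> [linarith; linarith]


section OptionMetric
variable {A : Type u} [MetricSpace A]

/-- Distance on `Option A` adjoining one new point at prescribed distances `ρ`. -/
noncomputable def optDist (ρ : A → ℝ) : Option A → Option A → ℝ
  | none, none => 0
  | none, some a => ρ a
  | some a, none => ρ a
  | some a, some b => dist a b

/-- A metric on `Option A` adjoining a new point at distance `ρ a` from each `a`. -/
noncomputable def optionMetricSpace (ρ : A → ℝ) (hpos : ∀ a, 0 < ρ a)
    (htri : ∀ a b, ρ a ≤ ρ b + dist a b)
    (hsum : ∀ a b, dist a b ≤ ρ a + ρ b) : MetricSpace (Option A) where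
  dist := optDist ρ
  dist_self := by rintro (_ | a) <;> simp [optDist]
  dist_comm := by
    rintro (_ | a) (_ | b) <;> simp [optDist, dist_comm]
  dist_triangle := by
    rintro (_ | a) (_ | b) (_ | c) <;> simp only [optDist]
    · simp
    · linarith [hpos c]
    · linarith [hpos b]
    · rw [dist_comm b c]; linarith [htri c b]
    · linarith [hpos a]
    · exact hsum a c
    · linarith [htri a b]
    · exact dist_triangle a b c
  eq_of_dist_eq_zero := by
    rintro (_ | a) (_ | b) h <;> simp only [optDist] at h
    · rfl
    · exact absurd h (ne_of_gt (hpos b))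
    · exact absurd h (ne_of_gt (hpos a))
    · rw [dist_eq_zero] at h; rw [h]
end OptionMetric

theorem injective_ball_prop {X : Type} [MetricSpace X]
    (hinj : IsInjectiveMetricSpace.{0, v, w} X)
    {I : Type} (c : I → X) (hc : Function.Injective c) (r : I → ℝ)
    (hpos : ∀ i, 0 < r i)
    (htri : ∀ i j, r i ≤ r j + dist (c i) (c j))
    (hsum : ∀ i j, dist (c i) (c j) ≤ r i + r j) :
    ∃ x : X, ∀ i, dist x (c i) ≤ r i := by
  letI instI : MetricSpace I := MetricSpace.induced c hc ‹_›
  have hdI : ∀ i j : I, dist i j = dist (c i) (c j) := fun _ _ => rfl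
  letI instB : MetricSpace (Option I) :=
    optionMetricSpace r hpos (fun i j => htri i j) (fun i j => hsum i j)
  have hdB : ∀ i : I, dist (none : Option I) (some i) = r i := fun _ => rfl
  have hdB2 : ∀ i j : I, dist (some i : Option I) (some j) = dist (c i) (c j) := fun _ _ => rfl
  set ι : ULift.{v} I → ULift.{w} (Option I) := fun a => ULift.up (some a.down) with hι
  have hiso : Isometry ι := by
    apply Isometry.of_dist_eq
    intro a b
    rw [hι]
    simp only [ULift.dist_eq]
    exact hdB2 a.down b.down
  set f : ULift.{v} I → X := fun a => c a.down with hf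
  have hlip : LipschitzWith 1 f := by
    apply LipschitzWith.of_dist_le_mul
    intro a b
    rw [NNReal.coe_one, one_mul, ULift.dist_eq]
    exact le_of_eq rfl
  obtain ⟨g, hg, hgf⟩ := hinj ι hiso f hlip
  refine ⟨g (ULift.up none), fun i => ?_⟩
  have h1 : c i = g (ι (ULift.up i)) := (hgf (ULift.up i)).symm
  rw [h1]
  have h2 := hg.dist_le_mul (ULift.up (none : Option I)) (ι (ULift.up i))
  rw [NNReal.coe_one, one_mul] at h2
  calc dist (g (ULift.up none)) (g (ι (ULift.up i))) ≤ dist (ULift.up (none : Option I)) (ι (ULift.up i)) := h2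
    _ = r i := by rw [hι]; simp only [ULift.dist_eq]; exact hdB i


lemma exists_abs_max (u : ℕ → ℝ) (hsum : Summable fun n => |u n|) (hu : u ≠ 0) :
    ∃ m, 0 < |u m| ∧ ∀ n, |u n| ≤ |u m| := by
  classical
  obtain ⟨n₁, hn₁⟩ : ∃ n, u n ≠ 0 := by
    by_contra h
    push_neg at h
    exact hu (funext fun n => h n)
  have hn₁pos : 0 < |u n₁| := abs_pos.2 hn₁
  have htend : Filter.Tendsto (fun n => |u n|) Filter.atTop (nhds 0) :=
    hsum.tendsto_atTop_zero
  have hev : ∀ᶠ n in Filter.atTop, |u n| < |u n₁| := htend.eventually (eventually_lt_nhds hn₁pos)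
  obtain ⟨N, hN⟩ := Filter.eventually_atTop.1 hev
  have hTfin : Set.Finite {n | |u n₁| ≤ |u n|} := by
    apply (Set.finite_Iio N).subset
    intro n hn
    by_contra hnN
    simp only [Set.mem_Iio, not_lt] at hnN
    exact absurd (hN n hnN) (not_lt.2 hn)
  have hTne : n₁ ∈ hTfin.toFinset := by simp [Set.mem_setOf_eq]
  obtain ⟨m, hmT, hm⟩ := hTfin.toFinset.exists_max_image (fun n => |u n|) ⟨n₁, hTne⟩
  have hmT' : |u n₁| ≤ |u m| := by
    have := hTfin.mem_toFinset.1 hmT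
    exact this
  refine ⟨m, lt_of_lt_of_le hn₁pos hmT', fun n => ?_⟩
  by_cases hn : n ∈ hTfin.toFinset
  · exact hm n hn
  · have : ¬ |u n₁| ≤ |u n| := by
      intro h
      exact hn (hTfin.mem_toFinset.2 h)
    linarith [not_le.1 this, hmT']

theorem not_injective_of_gt (u : ℕ → ℝ) (hsum : Summable fun n => |u n|)
    (m₀ : ℕ) (hm₀ : ∀ n, |u n| ≤ |u m₀|) (hm₀pos : 0 < |u m₀|)
    (hgt : 2 * |u m₀| < ∑' n, |u n|) :
    ¬ IsInjectiveMetricSpace.{0, v, w}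
        {x : lp (fun _ : ℕ => ℝ) ⊤ | ∑' n, u n * x n = 0} := by
  classical
  intro hinj
  set M := |u m₀| with hM
  set S := ∑' n, |u n| with hS
  have hS0 : 0 ≤ S := tsum_nonneg fun n => abs_nonneg _
  obtain ⟨F₀, hF₀⟩ :=
    (hsum.hasSum.eventually (eventually_gt_nhds (show S/2 + M < S by linarith))).exists
  set F : Finset ℕ := insert m₀ (F₀.filter fun n => u n ≠ 0) with hF
  have hm₀F : m₀ ∈ F := Finset.mem_insert_self _ _
  have hFne : ∀ k ∈ F, u k ≠ 0 := by
    intro k hk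
    rcases Finset.mem_insert.1 hk with rfl | hk'
    · intro h; rw [hM] at hm₀pos; simp [h] at hm₀pos
    · exact (Finset.mem_filter.1 hk').2
  have habsu : ∀ k ∈ F, 0 < |u k| := fun k hk => abs_pos.2 (hFne k hk)
  set SF := ∑ k ∈ F, |u k| with hSF
  have hSFgt : S/2 + M < SF := by
    calc S/2 + M < ∑ k ∈ F₀, |u k| := hF₀
      _ = ∑ k ∈ F₀.filter (fun n => u n ≠ 0), |u k| :=
        (Finset.sum_filter_of_ne fun x _ h => abs_ne_zero.1 h).symm
      _ ≤ SF := Finset.sum_le_sum_of_subset_of_nonneg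
          (Finset.subset_insert _ _) (fun _ _ _ => abs_nonneg _)
  have hMpos : 0 < M := hm₀pos
  have hSFpos : 0 < SF := by linarith
  set K := SF / (2 * M) with hK
  have hKpos : 0 < K := div_pos hSFpos (by linarith)
  have hMK : 2 * M * K = SF := by
    rw [hK]; field_simp
  set σ : ℕ → ℝ := fun n => if 0 ≤ u n then (1 : ℝ) else -1 with hσ
  have hσu : ∀ n, σ n * |u n| = u n := by
    intro n
    by_cases h : 0 ≤ u n
    · simp [hσ, h, abs_of_nonneg h]
    · simp only [hσ, h, if_false]
      rw [abs_of_neg (not_le.1 h)]; ring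
  have hσu2 : ∀ n, u n * σ n = |u n| := by
    intro n
    by_cases h : 0 ≤ u n
    · simp [hσ, h, abs_of_nonneg h]
    · simp only [hσ, h, if_false]
      rw [abs_of_neg (not_le.1 h)]; ring
  have hσabs : ∀ n, |σ n| = 1 := by
    intro n
    by_cases h : 0 ≤ u n <;> simp [hσ, h]
  have hσsq : ∀ n, σ n * σ n = 1 := by
    intro n
    by_cases h : 0 ≤ u n <;> simp [hσ, h]
  have hge2K : ∀ k ∈ F, 2 * K ≤ SF / |u k| := by
    intro k hk
    have h1 : |u k| ≤ M := hm₀ k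
    have h2 : 0 < |u k| := habsu k hk
    have h3 : SF / M ≤ SF / |u k| := by gcongr
    have h4 : SF / M = 2 * K := by
      rw [hK]; field_simp
    linarith
  -- the centers
  set w : {k // k ∈ F} → ℕ → ℝ := fun k n =>
    if n = (k : ℕ) then σ n * (SF / |u n| - 1) else if n ∈ F then -σ n else 0 with hw
  have hwbnd : ∀ k (n : ℕ), |w k n| ≤ SF / |u (k : ℕ)| + 1 := by
    intro k n
    have hdiv : 0 ≤ SF / |u (k : ℕ)| := le_of_lt (div_pos hSFpos (habsu _ k.2))
    by_cases h1 : n = (k : ℕ)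
    · subst h1
      rw [hw]
      simp only [eq_self_iff_true, if_true]
      rw [abs_mul, hσabs, one_mul, abs_le]
      constructor <;> [linarith; linarith]
    · rw [hw]
      simp only [if_neg h1]
      by_cases h2 : n ∈ F
      · rw [if_pos h2, abs_neg, hσabs]; linarith
      · rw [if_neg h2, abs_zero]; linarith
  have hwmem : ∀ k, Memℓp (w k) ⊤ := by
    intro k
    apply memℓp_infty
    refine ⟨SF / |u (k : ℕ)| + 1, ?_⟩
    rintro _ ⟨n, rfl⟩
    simpa [Real.norm_eq_abs] using hwbnd k n
  have hwker : ∀ k, (∑' n, u n * w k n) = 0 := by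
    intro k
    rw [tsum_eq_sum (s := F) (by
      intro n hn
      have h1 : n ≠ (k : ℕ) := fun h => hn (h ▸ k.2)
      rw [hw]
      simp only [if_neg h1, if_neg hn, mul_zero])]
    rw [← Finset.add_sum_erase F _ k.2]
    have hterm : u (k : ℕ) * w k (k : ℕ) = SF - |u (k : ℕ)| := by
      rw [hw]
      simp only [eq_self_iff_true, if_true]
      have h1 := hσu2 (k : ℕ)
      have h2 : |u (k : ℕ)| ≠ 0 := ne_of_gt (habsu _ k.2)
      field_simp
      linear_combination (SF - |u (k : ℕ)|) * h1
    have hrest : ∑ n ∈ F.erase (k : ℕ), u n * w k n = -(SF - |u (k : ℕ)|) := by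
      have h1 : ∀ n ∈ F.erase (k : ℕ), u n * w k n = -|u n| := by
        intro n hn
        obtain ⟨hne, hnF⟩ := Finset.mem_erase.1 hn
        rw [hw]
        simp only [if_neg hne, if_pos hnF]
        rw [mul_neg, hσu2]
      rw [Finset.sum_congr rfl h1, Finset.sum_neg_distrib]
      have h2 : ∑ n ∈ F.erase (k : ℕ), |u n| = SF - |u (k : ℕ)| := by
        have := Finset.add_sum_erase F (fun n => |u n|) k.2
        rw [hSF]; linarith
      rw [h2]
    rw [hterm, hrest]; ring
  set r : {k // k ∈ F} → ℝ := fun k => SF / |u (k : ℕ)| - K with hr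
  have hrpos : ∀ k, 0 < r k := by
    intro k
    have := hge2K (k : ℕ) k.2
    have e1 : r k = SF / |u (k : ℕ)| - K := rfl
    rw [e1]
    linarith
  set cV : {k // k ∈ F} → {x : lp (fun _ : ℕ => ℝ) ⊤ | ∑' n, u n * x n = 0} :=
    fun k => ⟨⟨w k, hwmem k⟩, hwker k⟩ with hcV
  have hcoord : ∀ k (n : ℕ), ((cV k : lp (fun _ : ℕ => ℝ) ⊤) : ∀ _ : ℕ, ℝ) n = w k n :=
    fun _ _ => rfl
  -- distances between centers
  have hwdiag : ∀ k : {k // k ∈ F}, w k (k : ℕ) = σ (k : ℕ) * (SF / |u (k : ℕ)| - 1) := by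
    intro k; rw [hw]; simp only [eq_self_iff_true, if_true]
  have hwoff : ∀ (k k' : {k // k ∈ F}), k ≠ k' → w k' (k : ℕ) = -σ (k : ℕ) := by
    intro k k' hne
    have h1 : (k : ℕ) ≠ (k' : ℕ) := fun h => hne (Subtype.ext h)
    rw [hw]
    simp only [if_neg h1, if_pos k.2]
  have hdistlow : ∀ (k k' : {k // k ∈ F}), k ≠ k' →
      SF / |u (k : ℕ)| ≤ dist (cV k : lp (fun _ : ℕ => ℝ) ⊤) (cV k' : lp (fun _ : ℕ => ℝ) ⊤) := by
    intro k k' hne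
    have h1 := coord_abs_le_dist (cV k : lp (fun _ : ℕ => ℝ) ⊤) (cV k' : lp (fun _ : ℕ => ℝ) ⊤) (k : ℕ)
    rw [hcoord, hcoord, hwdiag, hwoff k k' hne] at h1
    have h2 : σ (k : ℕ) * (SF / |u (k : ℕ)| - 1) - -σ (k : ℕ) = σ (k : ℕ) * (SF / |u (k : ℕ)|) := by
      ring
    rw [h2, abs_mul, hσabs, one_mul, abs_of_nonneg (le_of_lt (div_pos hSFpos (habsu _ k.2)))] at h1
    exact h1
  have hdistup : ∀ (k k' : {k // k ∈ F}),
      dist (cV k : lp (fun _ : ℕ => ℝ) ⊤) (cV k' : lp (fun _ : ℕ => ℝ) ⊤) ≤ r k + r k' := by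
    intro k k'
    have hrk := hrpos k
    have hrk' := hrpos k'
    apply dist_le_of_coords _ _ (by linarith)
    intro n
    rw [hcoord, hcoord]
    by_cases hkk' : k = k'
    · subst hkk'; simp only [sub_self, abs_zero]; linarith
    have h1 : (k : ℕ) ≠ (k' : ℕ) := fun h => hkk' (Subtype.ext h)
    have ek : r k = SF / |u (k : ℕ)| - K := rfl
    have ek' : r k' = SF / |u (k' : ℕ)| - K := rfl
    by_cases h2 : n = (k : ℕ)
    · rw [h2, hwdiag, hwoff k k' hkk']
      have h3 : σ (k : ℕ) * (SF / |u (k : ℕ)| - 1) - -σ (k : ℕ)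
          = σ (k : ℕ) * (SF / |u (k : ℕ)|) := by ring
      rw [h3, abs_mul, hσabs, one_mul, abs_of_nonneg (le_of_lt (div_pos hSFpos (habsu _ k.2)))]
      have := hge2K (k' : ℕ) k'.2
      rw [ek, ek']
      linarith
    by_cases h3 : n = (k' : ℕ)
    · rw [h3, hwdiag k']
      have h4 : w k (k' : ℕ) = -σ (k' : ℕ) := by
        rw [hw]; simp only [if_neg (h3 ▸ h2 : ¬ (k' : ℕ) = (k : ℕ)), if_pos k'.2]
      rw [h4]
      have h5 : -σ (k' : ℕ) - σ (k' : ℕ) * (SF / |u (k' : ℕ)| - 1)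
          = -(σ (k' : ℕ) * (SF / |u (k' : ℕ)|)) := by ring
      rw [h5, abs_neg, abs_mul, hσabs, one_mul,
        abs_of_nonneg (le_of_lt (div_pos hSFpos (habsu _ k'.2)))]
      have := hge2K (k : ℕ) k.2
      rw [ek, ek']
      linarith
    · have h4 : w k n = w k' n := by
        rw [hw]
        simp only [if_neg h2, if_neg h3]
      rw [h4, sub_self, abs_zero]
      linarith
  -- pairwise conditions in the subtype metric
  have htriS : ∀ k k', r k ≤ r k' + dist (cV k) (cV k') := by
    intro k k'
    rw [Subtype.dist_eq]
    by_cases hkk' : k = k'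
    · subst hkk'
      have := dist_nonneg (x := (cV k : lp (fun _ : ℕ => ℝ) ⊤)) (y := (cV k : lp (fun _ : ℕ => ℝ) ⊤))
      linarith [hrpos k]
    · have h1 := hdistlow k k' hkk'
      have h2 := hrpos k'
      calc r k = SF / |u (k : ℕ)| - K := rfl
        _ ≤ SF / |u (k : ℕ)| := by linarith [hKpos]
        _ ≤ dist (cV k : lp (fun _ : ℕ => ℝ) ⊤) (cV k' : lp (fun _ : ℕ => ℝ) ⊤) := h1
        _ ≤ r k' + dist (cV k : lp (fun _ : ℕ => ℝ) ⊤) (cV k' : lp (fun _ : ℕ => ℝ) ⊤) := by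
            linarith [hrpos k']
  have hsumS : ∀ k k', dist (cV k) (cV k') ≤ r k + r k' := by
    intro k k'
    rw [Subtype.dist_eq]
    exact hdistup k k'
  have hcInj : Function.Injective cV := by
    intro k k' h
    by_contra hne
    have h1 : w k (k : ℕ) = w k' (k : ℕ) := by
      rw [← hcoord k, ← hcoord k', h]
    rw [hwdiag, hwoff k k' hne] at h1
    have h3 : σ (k : ℕ) * (σ (k : ℕ) * (SF / |u (k : ℕ)| - 1)) = σ (k : ℕ) * (-σ (k : ℕ)) := by
      rw [h1]
    rw [← mul_assoc, hσsq, one_mul, mul_neg, hσsq] at h3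
    have h4 : SF / |u (k : ℕ)| = 0 := by linarith
    rcases div_eq_zero_iff.1 h4 with h5 | h5
    · exact absurd h5 (ne_of_gt hSFpos)
    · exact absurd h5 (ne_of_gt (habsu _ k.2))
  obtain ⟨x, hx⟩ := injective_ball_prop hinj cV hcInj r hrpos htriS hsumS
  -- derive the contradiction
  have hxbnd : ∀ n, |((x : lp (fun _ : ℕ => ℝ) ⊤) : ∀ _ : ℕ, ℝ) n| ≤ ‖(x : lp (fun _ : ℕ => ℝ) ⊤)‖ :=
    fun n => coord_abs_le_norm _ n
  set xf : ℕ → ℝ := fun n => ((x : lp (fun _ : ℕ => ℝ) ⊤) : ∀ _ : ℕ, ℝ) n with hxf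
  have hSx : Summable fun n => u n * xf n := summable_mul_of_bdd hsum hxbnd
  have hxker : (∑' n, u n * xf n) = 0 := x.2
  have hxcoordF : ∀ k : {k // k ∈ F}, |u (k : ℕ)| * (K - 1) ≤ u (k : ℕ) * xf (k : ℕ) := by
    intro k
    have h1 : |xf (k : ℕ) - w k (k : ℕ)| ≤ r k := by
      have h2 := coord_abs_le_dist (x : lp (fun _ : ℕ => ℝ) ⊤) (cV k : lp (fun _ : ℕ => ℝ) ⊤) (k : ℕ)
      rw [hcoord] at h2
      exact le_trans h2 (by rw [← Subtype.dist_eq]; exact hx k)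
    have h2 : -(r k) ≤ σ (k : ℕ) * (xf (k : ℕ) - w k (k : ℕ)) := by
      have h3 : |σ (k : ℕ) * (xf (k : ℕ) - w k (k : ℕ))| ≤ r k := by
        rw [abs_mul, hσabs, one_mul]; exact h1
      exact (abs_le.1 h3).1
    have h4 : σ (k : ℕ) * w k (k : ℕ) = SF / |u (k : ℕ)| - 1 := by
      rw [hwdiag, ← mul_assoc, hσsq, one_mul]
    have h5 : K - 1 ≤ σ (k : ℕ) * xf (k : ℕ) := by
      have h6 : σ (k : ℕ) * xf (k : ℕ)
          = σ (k : ℕ) * (xf (k : ℕ) - w k (k : ℕ)) + σ (k : ℕ) * w k (k : ℕ) := by ring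
      rw [h6, h4]
      have h7 : r k = SF / |u (k : ℕ)| - K := rfl
      have h9 : -(SF / |u (k : ℕ)| - K) ≤ σ (k : ℕ) * (xf (k : ℕ) - w k (k : ℕ)) := h7 ▸ h2
      linarith [h9]
    have h8 : u (k : ℕ) * xf (k : ℕ) = |u (k : ℕ)| * (σ (k : ℕ) * xf (k : ℕ)) := by
      linear_combination xf (k : ℕ) * (hσu (k : ℕ)).symm
    rw [h8]
    exact mul_le_mul_of_nonneg_left h5 (abs_nonneg _)
  have hxtail : ∀ n, n ∉ F → |xf n| ≤ K := by
    intro n hn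
    set k₀ : {k // k ∈ F} := ⟨m₀, hm₀F⟩ with hk₀
    have h1 : |xf n - w k₀ n| ≤ r k₀ := by
      have h2 := coord_abs_le_dist (x : lp (fun _ : ℕ => ℝ) ⊤) (cV k₀ : lp (fun _ : ℕ => ℝ) ⊤) n
      rw [hcoord] at h2
      exact le_trans h2 (by rw [← Subtype.dist_eq]; exact hx k₀)
    have h3 : w k₀ n = 0 := by
      have h4 : n ≠ (k₀ : ℕ) := fun h => hn (h ▸ k₀.2)
      rw [hw]; simp only [if_neg h4, if_neg hn]
    have h5 : r k₀ = K := by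
      have e1 : r k₀ = SF / |u m₀| - K := rfl
      have h6 : SF / |u m₀| = 2 * K := by
        rw [hK, hM]; field_simp
      rw [e1, h6]; ring
    rw [h3, sub_zero] at h1
    rw [← h5]; exact h1
  -- sum the estimates
  have hsplit := Summable.sum_add_tsum_subtype_compl hSx F
  have habs_split := Summable.sum_add_tsum_subtype_compl hsum F
  have hlow1 : SF * (K - 1) ≤ ∑ n ∈ F, u n * xf n := by
    have h1 : ∀ n ∈ F, |u n| * (K - 1) ≤ u n * xf n := fun n hn => hxcoordF ⟨n, hn⟩
    calc SF * (K - 1) = ∑ n ∈ F, |u n| * (K - 1) := by rw [hSF, Finset.sum_mul]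
      _ ≤ ∑ n ∈ F, u n * xf n := Finset.sum_le_sum h1
  have hcompl_abs : (∑' n : {n // n ∉ F}, |u (n : ℕ)|) = S - SF := by
    rw [hS, hSF]; linarith [habs_split]
  have hlow2 : -((S - SF) * K) ≤ ∑' n : {n // n ∉ F}, u (n : ℕ) * xf (n : ℕ) := by
    have hSg : Summable fun n : {n // n ∉ F} => |u (n : ℕ)| * K :=
      ((hsum.mul_right K).subtype _)
    have hSf : Summable fun n : {n // n ∉ F} => u (n : ℕ) * xf (n : ℕ) := hSx.subtype _
    have h1 : ∀ n : {n // n ∉ F}, -(|u (n : ℕ)| * K) ≤ u (n : ℕ) * xf (n : ℕ) := by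
      intro n
      have h2 : |u (n : ℕ) * xf (n : ℕ)| ≤ |u (n : ℕ)| * K := by
        rw [abs_mul]
        exact mul_le_mul_of_nonneg_left (hxtail _ n.2) (abs_nonneg _)
      linarith [neg_abs_le (u (n : ℕ) * xf (n : ℕ))]
    have h3 := Summable.tsum_le_tsum h1 hSg.neg hSf
    rw [tsum_neg, tsum_mul_right] at h3
    rw [hcompl_abs] at h3
    exact h3
  have hfinal : 0 < (2 * SF - S) * K - SF := by
    nlinarith [mul_pos hKpos (show (0:ℝ) < 2 * SF - S - 2 * M by linarith)]
  have h0 : (0:ℝ) = ∑ n ∈ F, u n * xf n + ∑' n : {n // n ∉ F}, u (n : ℕ) * xf (n : ℕ) := by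
    rw [hsplit, hxker]
  nlinarith [hlow1, hlow2, h0, hfinal]

/-- For a non-zero absolutely summable sequence `u ∈ l_1(ℕ)`, the kernel of the
functional `Φ(x) = ∑' n, u n * x n` on `l_∞(ℕ)` is injective with the induced metric if
and only if `‖u‖₁ ≤ 2 ‖u‖_∞`. -/
theorem l1_functional_kernel_injective_iff (u : ℕ → ℝ)
    (hsum : Summable fun n => |u n|) (hu : u ≠ 0) :
    IsInjectiveMetricSpace.{0, v, w}
        {x : lp (fun _ : ℕ => ℝ) ⊤ | ∑' n, u n * x n = 0} ↔
      ∑' n, |u n| ≤ 2 * ⨆ n, |u n| := by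
  obtain ⟨m₀, hpos, hmax⟩ := exists_abs_max u hsum hu
  have hbdd : BddAbove (Set.range fun n => |u n|) := ⟨|u m₀|, by rintro _ ⟨n, rfl⟩; exact hmax n⟩
  have hsup : (⨆ n, |u n|) = |u m₀| :=
    le_antisymm (ciSup_le hmax) (le_ciSup hbdd m₀)
  rw [hsup]
  constructor
  · intro hinj
    by_contra h
    push_neg at h
    exact not_injective_of_gt u hsum m₀ hmax hpos h hinj
  · intro hle
    exact (V_hyperconvex u hsum m₀ hmax hpos hle).isInjective
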